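/- For any w, λ ∈ k^×, the formulas K·m_i = wλq^{−2i}·m_i, K̃·m_i = w⁻¹λq^{−2i}·m_i, F·m_i = m_{i+1}, E·m_0 = 0, and E·m_i = [i]_q·w·(λq^{1−i} − λ⁻¹q^{i−1})/(q − q⁻¹)·m_{i−1} for i ≥ 1 define a D_q-module structure on the k-vector space with basis {m_i : i ∈ ℕ}: there is a unique k-algebra homomorphism from D_q to the endomorphism algebra of this space taking E, F, K, K̃ to these operators (and K⁻¹, K̃⁻¹ to the inverse operators). Moreover, the resulting left D_q-module M_w(λ) is isomorphic to the quotient of D_q by the left ideal D_q·E + D_q·(K − wλ) + D_q·(K̃ − w⁻¹λ). -/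

import Mathlib

noncomputable section

/-- Generators of the quantum double `D_q`. -/
inductive DGen : Type
  | E | F | K | Kinv | Kt | Ktinv
  deriving DecidableEq

/-- The defining relations of `D_q`. -/
inductive DRel (k : Type) [Field k] (q : k) :
    FreeAlgebra k DGen → FreeAlgebra k DGen → Prop
  | KE : DRel k q (FreeAlgebra.ι k DGen.K * FreeAlgebra.ι k DGen.E)
      ((q ^ 2) • (FreeAlgebra.ι k DGen.E * FreeAlgebra.ι k DGen.K))
  | KF : DRel k q (FreeAlgebra.ι k DGen.K * FreeAlgebra.ι k DGen.F)
      (((q ^ 2)⁻¹) • (FreeAlgebra.ι k DGen.F * FreeAlgebra.ι k DGen.K))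
  | KtE : DRel k q (FreeAlgebra.ι k DGen.Kt * FreeAlgebra.ι k DGen.E)
      ((q ^ 2) • (FreeAlgebra.ι k DGen.E * FreeAlgebra.ι k DGen.Kt))
  | KtF : DRel k q (FreeAlgebra.ι k DGen.Kt * FreeAlgebra.ι k DGen.F)
      (((q ^ 2)⁻¹) • (FreeAlgebra.ι k DGen.F * FreeAlgebra.ι k DGen.Kt))
  | KKinv : DRel k q (FreeAlgebra.ι k DGen.K * FreeAlgebra.ι k DGen.Kinv) 1
  | KinvK : DRel k q (FreeAlgebra.ι k DGen.Kinv * FreeAlgebra.ι k DGen.K) 1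
  | KtKtinv : DRel k q (FreeAlgebra.ι k DGen.Kt * FreeAlgebra.ι k DGen.Ktinv) 1
  | KtinvKt : DRel k q (FreeAlgebra.ι k DGen.Ktinv * FreeAlgebra.ι k DGen.Kt) 1
  | KKt : DRel k q (FreeAlgebra.ι k DGen.K * FreeAlgebra.ι k DGen.Kt)
      (FreeAlgebra.ι k DGen.Kt * FreeAlgebra.ι k DGen.K)
  | EF : DRel k q (FreeAlgebra.ι k DGen.E * FreeAlgebra.ι k DGen.F)
      (FreeAlgebra.ι k DGen.F * FreeAlgebra.ι k DGen.E +
        ((q - q⁻¹)⁻¹) • (FreeAlgebra.ι k DGen.K - FreeAlgebra.ι k DGen.Ktinv))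

/-- The quantum double `D_q` of `U_q(sl2)^{≤0}`, presented by generators and relations. -/
abbrev Dq (k : Type) [Field k] (q : k) := RingQuot (DRel k q)

def DE (k : Type) [Field k] (q : k) : Dq k q :=
  RingQuot.mkAlgHom k (DRel k q) (FreeAlgebra.ι k DGen.E)
def DF (k : Type) [Field k] (q : k) : Dq k q :=
  RingQuot.mkAlgHom k (DRel k q) (FreeAlgebra.ι k DGen.F)
def DK (k : Type) [Field k] (q : k) : Dq k q :=
  RingQuot.mkAlgHom k (DRel k q) (FreeAlgebra.ι k DGen.K)
def DKinv (k : Type) [Field k] (q : k) : Dq k q :=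
  RingQuot.mkAlgHom k (DRel k q) (FreeAlgebra.ι k DGen.Kinv)
def DKt (k : Type) [Field k] (q : k) : Dq k q :=
  RingQuot.mkAlgHom k (DRel k q) (FreeAlgebra.ι k DGen.Kt)
def DKtinv (k : Type) [Field k] (q : k) : Dq k q :=
  RingQuot.mkAlgHom k (DRel k q) (FreeAlgebra.ι k DGen.Ktinv)

/-- The quantum integer `[n]_q = (qⁿ - q⁻ⁿ)/(q - q⁻¹)`. -/
def qint (k : Type) [Field k] (q : k) (n : ℕ) : k := (q ^ n - q⁻¹ ^ n) / (q - q⁻¹)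

/-- The quantum factorial `[n]_q!`. -/
def qfact (k : Type) [Field k] (q : k) : ℕ → k
  | 0 => 1
  | n + 1 => qfact k q n * qint k q (n + 1)

/-- The Gaussian binomial coefficient `[m choose n]_q`. -/
def qbinom (k : Type) [Field k] (q : k) (m n : ℕ) : k :=
  qfact k q m / (qfact k q n * qfact k q (m - n))

/-- The element `[K,K̃;c;t] = ∏_{s=1}^t (K q^{c-s+1} - K̃⁻¹ q^{-c+s-1})/(q^s - q^{-s})` of `D_q`. -/
def KKtc (k : Type) [Field k] (q : k) (c : ℤ) : ℕ → Dq k q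
  | 0 => 1
  | t + 1 =>
      KKtc k q c t *
        ((q ^ ((t : ℤ) + 1) - q ^ (-((t : ℤ) + 1)))⁻¹ •
          (q ^ (c - (t : ℤ)) • DK k q - q ^ ((t : ℤ) - c) • DKtinv k q))

/-- Action of `K` on the Verma module `M_w(λ)`: `K·m_i = wλq^{−2i}·m_i`. -/
def vK (k : Type) [Field k] (q w lam : k) : (ℕ →₀ k) →ₗ[k] (ℕ →₀ k) :=
  Finsupp.lift (ℕ →₀ k) k ℕ fun i =>
    (w * lam * q ^ (-(2 * (i : ℤ)))) • Finsupp.single i 1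

/-- Action of `K⁻¹` on `M_w(λ)` (the inverse operator of `vK`). -/
def vKinv (k : Type) [Field k] (q w lam : k) : (ℕ →₀ k) →ₗ[k] (ℕ →₀ k) :=
  Finsupp.lift (ℕ →₀ k) k ℕ fun i =>
    ((w * lam * q ^ (-(2 * (i : ℤ))))⁻¹) • Finsupp.single i 1

/-- Action of `K̃` on `M_w(λ)`: `K̃·m_i = w⁻¹λq^{−2i}·m_i`. -/
def vKt (k : Type) [Field k] (q w lam : k) : (ℕ →₀ k) →ₗ[k] (ℕ →₀ k) :=
  Finsupp.lift (ℕ →₀ k) k ℕ fun i =>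
    (w⁻¹ * lam * q ^ (-(2 * (i : ℤ)))) • Finsupp.single i 1

/-- Action of `K̃⁻¹` on `M_w(λ)` (the inverse operator of `vKt`). -/
def vKtinv (k : Type) [Field k] (q w lam : k) : (ℕ →₀ k) →ₗ[k] (ℕ →₀ k) :=
  Finsupp.lift (ℕ →₀ k) k ℕ fun i =>
    ((w⁻¹ * lam * q ^ (-(2 * (i : ℤ))))⁻¹) • Finsupp.single i 1

/-- Action of `F` on `M_w(λ)`: `F·m_i = m_{i+1}`. -/
def vF (k : Type) [Field k] : (ℕ →₀ k) →ₗ[k] (ℕ →₀ k) :=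
  Finsupp.lift (ℕ →₀ k) k ℕ fun i => Finsupp.single (i + 1) 1

/-- Action of `E` on `M_w(λ)`: `E·m_0 = 0` and
`E·m_i = [i]_q·w·(λq^{1−i} − λ⁻¹q^{i−1})/(q − q⁻¹)·m_{i−1}` for `i ≥ 1`. -/
def vE (k : Type) [Field k] (q w lam : k) : (ℕ →₀ k) →ₗ[k] (ℕ →₀ k) :=
  Finsupp.lift (ℕ →₀ k) k ℕ fun i =>
    if i = 0 then 0
    else
      (qint k q i * w * (lam * q ^ (1 - (i : ℤ)) - lam⁻¹ * q ^ ((i : ℤ) - 1)) / (q - q⁻¹)) •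
        Finsupp.single (i - 1) 1

/-- `ρ` realizes the Verma module `M_w(λ)` on `ℕ →₀ k`. -/
def VermaCond (k : Type) [Field k] (q w lam : k)
    (ρ : Dq k q →ₐ[k] Module.End k (ℕ →₀ k)) : Prop :=
  ρ (DE k q) = vE k q w lam ∧ ρ (DF k q) = vF k ∧
  ρ (DK k q) = vK k q w lam ∧ ρ (DKinv k q) = vKinv k q w lam ∧
  ρ (DKt k q) = vKt k q w lam ∧ ρ (DKtinv k q) = vKtinv k q w lam

namespace VermaAux

variable {k : Type} [Field k]

/-- Eigenvalue of `K` on `m_i`. -/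
def kapK (q w lam : k) (i : ℕ) : k := w * lam * q ^ (-(2 * (i : ℤ)))

/-- Eigenvalue of `K̃` on `m_i`. -/
def kapKt (q w lam : k) (i : ℕ) : k := w⁻¹ * lam * q ^ (-(2 * (i : ℤ)))

/-- Coefficient of `E` acting on `m_i`. -/
def cE (q w lam : k) (i : ℕ) : k :=
  qint k q i * w * (lam * q ^ (1 - (i : ℤ)) - lam⁻¹ * q ^ ((i : ℤ) - 1)) / (q - q⁻¹)

variable {q w lam : k}

lemma hqq (hq0 : q ≠ 0) (hq1 : q ^ 2 ≠ 1) : q - q⁻¹ ≠ 0 := by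
  intro h
  apply hq1
  have : q = q⁻¹ := sub_eq_zero.mp h
  calc q ^ 2 = q * q := sq q
    _ = q * q⁻¹ := by rw [← this]
    _ = 1 := mul_inv_cancel₀ hq0

lemma kapK_succ (hq0 : q ≠ 0) (i : ℕ) :
    kapK q w lam (i + 1) = (q ^ 2)⁻¹ * kapK q w lam i := by
  unfold kapK
  have h2 : ((q : k) ^ 2)⁻¹ = q ^ (-2 : ℤ) := by
    rw [← zpow_natCast q 2, ← zpow_neg]; norm_num
  push_cast
  rw [show -(2 * ((i : ℤ) + 1)) = (-2) + -(2 * (i : ℤ)) by ring, zpow_add₀ hq0, h2]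
  ring

lemma kapKt_succ (hq0 : q ≠ 0) (i : ℕ) :
    kapKt q w lam (i + 1) = (q ^ 2)⁻¹ * kapKt q w lam i := by
  unfold kapKt
  have h2 : ((q : k) ^ 2)⁻¹ = q ^ (-2 : ℤ) := by
    rw [← zpow_natCast q 2, ← zpow_neg]; norm_num
  push_cast
  rw [show -(2 * ((i : ℤ) + 1)) = (-2) + -(2 * (i : ℤ)) by ring, zpow_add₀ hq0, h2]
  ring

lemma kapK_ne (hq0 : q ≠ 0) (hw : w ≠ 0) (hlam : lam ≠ 0) (i : ℕ) :
    kapK q w lam i ≠ 0 := by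
  unfold kapK
  exact mul_ne_zero (mul_ne_zero hw hlam) (zpow_ne_zero _ hq0)

lemma kapKt_ne (hq0 : q ≠ 0) (hw : w ≠ 0) (hlam : lam ≠ 0) (i : ℕ) :
    kapKt q w lam i ≠ 0 := by
  unfold kapKt
  exact mul_ne_zero (mul_ne_zero (inv_ne_zero hw) hlam) (zpow_ne_zero _ hq0)

lemma cE_zero : cE (k := k) q w lam 0 = 0 := by
  simp [cE, qint]

lemma cE_rec (hq0 : q ≠ 0) (hq1 : q ^ 2 ≠ 1) (hw : w ≠ 0) (hlam : lam ≠ 0) (i : ℕ) :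
    cE q w lam (i + 1) =
      cE q w lam i + (q - q⁻¹)⁻¹ * (kapK q w lam i - (kapKt q w lam i)⁻¹) := by
  have hqq' : q - q⁻¹ ≠ 0 := hqq hq0 hq1
  have ha : q ^ i ≠ 0 := pow_ne_zero _ hq0
  have hKt : (kapKt q w lam i)⁻¹ = w * lam⁻¹ * (q ^ i * q ^ i) := by
    unfold kapKt
    rw [show -(2 * (i : ℤ)) = -(i : ℤ) + -(i : ℤ) from by ring, zpow_add₀ hq0, zpow_neg,
      zpow_natCast]
    field_simp
  have hK : kapK q w lam i = w * lam * ((q ^ i)⁻¹ * (q ^ i)⁻¹) := by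
    unfold kapK
    rw [show -(2 * (i : ℤ)) = -(i : ℤ) + -(i : ℤ) from by ring, zpow_add₀ hq0, zpow_neg,
      zpow_natCast]
  have cancel : ∀ P S : k, ((P / (q - q⁻¹)) * w * S) / (q - q⁻¹) * (q - q⁻¹) ^ 2 = P * w * S := by
    intro P S
    have h : ((P / (q - q⁻¹)) * w * S) / (q - q⁻¹) * (q - q⁻¹) ^ 2 =
        (P * w * S) * ((q - q⁻¹) * (q - q⁻¹)⁻¹) * ((q - q⁻¹) * (q - q⁻¹)⁻¹) := by
      ring
    rw [h, mul_inv_cancel₀ hqq', mul_one, mul_one]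
  have cancel2 : ∀ T : k, ((q - q⁻¹)⁻¹ * T) * (q - q⁻¹) ^ 2 = T * (q - q⁻¹) := by
    intro T
    rw [sq, mul_comm ((q - q⁻¹)⁻¹) T, mul_assoc, ← mul_assoc ((q - q⁻¹)⁻¹),
      inv_mul_cancel₀ hqq', one_mul]
  apply mul_right_cancel₀ (pow_ne_zero 2 hqq')
  rw [hKt, hK, add_mul]
  unfold cE qint
  rw [cancel, cancel, cancel2]
  have h1 : q ^ ((1 : ℤ) - (((i : ℕ) + 1 : ℕ) : ℤ)) = (q ^ i)⁻¹ := by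
    push_cast
    rw [show (1 : ℤ) - ((i : ℤ) + 1) = -(i : ℤ) from by ring, zpow_neg, zpow_natCast]
  have h2 : q ^ ((((i : ℕ) + 1 : ℕ) : ℤ) - 1) = q ^ i := by
    push_cast
    rw [show ((i : ℤ) + 1) - 1 = (i : ℤ) from by ring, zpow_natCast]
  have h3 : q ^ ((1 : ℤ) - (i : ℤ)) = q * (q ^ i)⁻¹ := by
    rw [show (1 : ℤ) - (i : ℤ) = 1 + -(i : ℤ) from by ring, zpow_add₀ hq0, zpow_one, zpow_neg,
      zpow_natCast]
  have h4 : q ^ ((i : ℤ) - 1) = q ^ i * q⁻¹ := by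
    rw [sub_eq_add_neg, zpow_add₀ hq0, zpow_natCast, zpow_neg, zpow_one]
  rw [h1, h2, h3, h4]
  simp only [inv_pow, pow_succ]
  generalize hA : q ^ i = a at ha ⊢
  ring

section Ops

variable {k : Type} [Field k] {q w lam : k}

lemma vK_single (i : ℕ) (b : k) :
    vK k q w lam (Finsupp.single i b) = (kapK q w lam i * b) • Finsupp.single i 1 := by
  rw [vK, Finsupp.lift_apply, Finsupp.sum_single_index (by simp), smul_smul]
  congr 1
  rw [kapK, mul_comm]

lemma vKinv_single (i : ℕ) (b : k) :
    vKinv k q w lam (Finsupp.single i b) =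
      ((kapK q w lam i)⁻¹ * b) • Finsupp.single i 1 := by
  rw [vKinv, Finsupp.lift_apply, Finsupp.sum_single_index (by simp), smul_smul]
  congr 1
  rw [kapK, mul_comm]

lemma vKt_single (i : ℕ) (b : k) :
    vKt k q w lam (Finsupp.single i b) = (kapKt q w lam i * b) • Finsupp.single i 1 := by
  rw [vKt, Finsupp.lift_apply, Finsupp.sum_single_index (by simp), smul_smul]
  congr 1
  rw [kapKt, mul_comm]

lemma vKtinv_single (i : ℕ) (b : k) :
    vKtinv k q w lam (Finsupp.single i b) =
      ((kapKt q w lam i)⁻¹ * b) • Finsupp.single i 1 := by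
  rw [vKtinv, Finsupp.lift_apply, Finsupp.sum_single_index (by simp), smul_smul]
  congr 1
  rw [kapKt, mul_comm]

lemma vF_single (i : ℕ) (b : k) :
    vF k (Finsupp.single i b) = b • Finsupp.single (i + 1) 1 := by
  rw [vF, Finsupp.lift_apply, Finsupp.sum_single_index (by simp)]

lemma vE_single (i : ℕ) (b : k) :
    vE k q w lam (Finsupp.single i b) = (cE q w lam i * b) • Finsupp.single (i - 1) 1 := by
  cases i with
  | zero =>
      rw [vE, Finsupp.lift_apply, Finsupp.sum_single_index (by simp), cE_zero, zero_mul,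
        zero_smul, if_pos rfl, smul_zero]
  | succ j =>
      rw [vE, Finsupp.lift_apply, Finsupp.sum_single_index (by simp), if_neg (Nat.succ_ne_zero j),
        smul_smul]
      congr 1
      rw [cE, mul_comm]

-- operator relations

lemma opKE (hq0 : q ≠ 0) :
    vK k q w lam * vE k q w lam = (q ^ 2) • (vE k q w lam * vK k q w lam) := by
  apply Finsupp.lhom_ext
  intro i b
  simp only [Module.End.mul_apply, LinearMap.smul_apply]
  rw [vE_single, vK_single, map_smul, vK_single, map_smul, vE_single, smul_smul, smul_smul,
    smul_smul]
  cases i with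
  | zero => simp [cE_zero]
  | succ j =>
      congr 1
      have := kapK_succ (q := q) (w := w) (lam := lam) hq0 j
      rw [Nat.add_sub_cancel]
      rw [this]
      have h2 : (q : k) ^ 2 ≠ 0 := pow_ne_zero _ hq0
      field_simp

lemma opKtE (hq0 : q ≠ 0) :
    vKt k q w lam * vE k q w lam = (q ^ 2) • (vE k q w lam * vKt k q w lam) := by
  apply Finsupp.lhom_ext
  intro i b
  simp only [Module.End.mul_apply, LinearMap.smul_apply]
  rw [vE_single, vKt_single, map_smul, vKt_single, map_smul, vE_single, smul_smul, smul_smul,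
    smul_smul]
  cases i with
  | zero => simp [cE_zero]
  | succ j =>
      congr 1
      have := kapKt_succ (q := q) (w := w) (lam := lam) hq0 j
      rw [Nat.add_sub_cancel]
      rw [this]
      have h2 : (q : k) ^ 2 ≠ 0 := pow_ne_zero _ hq0
      field_simp

lemma opKF (hq0 : q ≠ 0) :
    vK k q w lam * vF k = ((q ^ 2)⁻¹) • (vF k * vK k q w lam) := by
  apply Finsupp.lhom_ext
  intro i b
  simp only [Module.End.mul_apply, LinearMap.smul_apply]
  rw [vF_single, map_smul, vK_single, vK_single, map_smul, vF_single, smul_smul, smul_smul,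
    smul_smul]
  congr 1
  rw [kapK_succ hq0 i]
  ring

lemma opKtF (hq0 : q ≠ 0) :
    vKt k q w lam * vF k = ((q ^ 2)⁻¹) • (vF k * vKt k q w lam) := by
  apply Finsupp.lhom_ext
  intro i b
  simp only [Module.End.mul_apply, LinearMap.smul_apply]
  rw [vF_single, map_smul, vKt_single, vKt_single, map_smul, vF_single, smul_smul, smul_smul,
    smul_smul]
  congr 1
  rw [kapKt_succ hq0 i]
  ring

lemma opKKinv (hq0 : q ≠ 0) (hw : w ≠ 0) (hlam : lam ≠ 0) :
    vK k q w lam * vKinv k q w lam = 1 := by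
  apply Finsupp.lhom_ext
  intro i b
  simp only [Module.End.mul_apply, Module.End.one_apply]
  rw [vKinv_single, map_smul, vK_single, smul_smul, mul_one,
    mul_comm ((kapK q w lam i)⁻¹) b, mul_assoc, inv_mul_cancel₀ (kapK_ne hq0 hw hlam i),
    mul_one, Finsupp.smul_single', mul_one]

lemma opKinvK (hq0 : q ≠ 0) (hw : w ≠ 0) (hlam : lam ≠ 0) :
    vKinv k q w lam * vK k q w lam = 1 := by
  apply Finsupp.lhom_ext
  intro i b
  simp only [Module.End.mul_apply, Module.End.one_apply]
  rw [vK_single, map_smul, vKinv_single, smul_smul, mul_one,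
    mul_comm (kapK q w lam i) b, mul_assoc, mul_inv_cancel₀ (kapK_ne hq0 hw hlam i),
    mul_one, Finsupp.smul_single', mul_one]

lemma opKtKtinv (hq0 : q ≠ 0) (hw : w ≠ 0) (hlam : lam ≠ 0) :
    vKt k q w lam * vKtinv k q w lam = 1 := by
  apply Finsupp.lhom_ext
  intro i b
  simp only [Module.End.mul_apply, Module.End.one_apply]
  rw [vKtinv_single, map_smul, vKt_single, smul_smul, mul_one,
    mul_comm ((kapKt q w lam i)⁻¹) b, mul_assoc, inv_mul_cancel₀ (kapKt_ne hq0 hw hlam i),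
    mul_one, Finsupp.smul_single', mul_one]

lemma opKtinvKt (hq0 : q ≠ 0) (hw : w ≠ 0) (hlam : lam ≠ 0) :
    vKtinv k q w lam * vKt k q w lam = 1 := by
  apply Finsupp.lhom_ext
  intro i b
  simp only [Module.End.mul_apply, Module.End.one_apply]
  rw [vKt_single, map_smul, vKtinv_single, smul_smul, mul_one,
    mul_comm (kapKt q w lam i) b, mul_assoc, mul_inv_cancel₀ (kapKt_ne hq0 hw hlam i),
    mul_one, Finsupp.smul_single', mul_one]

lemma opKKt : vK k q w lam * vKt k q w lam = vKt k q w lam * vK k q w lam := by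
  apply Finsupp.lhom_ext
  intro i b
  simp only [Module.End.mul_apply]
  rw [vKt_single, map_smul, vK_single, vK_single, map_smul, vKt_single, smul_smul, smul_smul]
  congr 1
  ring

lemma opEF (hq0 : q ≠ 0) (hq1 : q ^ 2 ≠ 1) (hw : w ≠ 0) (hlam : lam ≠ 0) :
    vE k q w lam * vF k =
      vF k * vE k q w lam + ((q - q⁻¹)⁻¹) • (vK k q w lam - vKtinv k q w lam) := by
  apply Finsupp.lhom_ext
  intro i b
  simp only [Module.End.mul_apply, LinearMap.add_apply, LinearMap.smul_apply,
    LinearMap.sub_apply]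
  rw [vF_single, map_smul, vE_single, vE_single, map_smul, vF_single, vK_single, vKtinv_single,
    Nat.add_sub_cancel, smul_smul, smul_smul, ← sub_smul, smul_smul]
  cases i with
  | zero =>
      rw [cE_zero, zero_mul, zero_mul, zero_smul]
      have h := cE_rec hq0 hq1 hw hlam 0
      rw [cE_zero, zero_add] at h
      rw [h]
      simp only [zero_add]
      congr 1
      ring
  | succ j =>
      rw [Nat.succ_sub_one, ← add_smul]
      congr 1
      rw [cE_rec hq0 hq1 hw hlam (j + 1)]
      ring

end Ops
section Rho

variable {k : Type} [Field k] {q w lam : k}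

/-- Images of the generators. -/
def gen (q w lam : k) : DGen → Module.End k (ℕ →₀ k)
  | DGen.E => vE k q w lam
  | DGen.F => vF k
  | DGen.K => vK k q w lam
  | DGen.Kinv => vKinv k q w lam
  | DGen.Kt => vKt k q w lam
  | DGen.Ktinv => vKtinv k q w lam

lemma rel_lift (hq0 : q ≠ 0) (hq1 : q ^ 2 ≠ 1) (hw : w ≠ 0) (hlam : lam ≠ 0) :
    ∀ ⦃x y : FreeAlgebra k DGen⦄, DRel k q x y →
      FreeAlgebra.lift k (gen q w lam) x = FreeAlgebra.lift k (gen q w lam) y := by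
  intro x y h
  induction h with
  | KE =>
      simp only [map_mul, map_smul, FreeAlgebra.lift_ι_apply, gen]
      exact opKE hq0
  | KF =>
      simp only [map_mul, map_smul, FreeAlgebra.lift_ι_apply, gen]
      exact opKF hq0
  | KtE =>
      simp only [map_mul, map_smul, FreeAlgebra.lift_ι_apply, gen]
      exact opKtE hq0
  | KtF =>
      simp only [map_mul, map_smul, FreeAlgebra.lift_ι_apply, gen]
      exact opKtF hq0
  | KKinv =>
      simp only [map_mul, map_one, FreeAlgebra.lift_ι_apply, gen]
      exact opKKinv hq0 hw hlam
  | KinvK =>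
      simp only [map_mul, map_one, FreeAlgebra.lift_ι_apply, gen]
      exact opKinvK hq0 hw hlam
  | KtKtinv =>
      simp only [map_mul, map_one, FreeAlgebra.lift_ι_apply, gen]
      exact opKtKtinv hq0 hw hlam
  | KtinvKt =>
      simp only [map_mul, map_one, FreeAlgebra.lift_ι_apply, gen]
      exact opKtinvKt hq0 hw hlam
  | KKt =>
      simp only [map_mul, FreeAlgebra.lift_ι_apply, gen]
      exact opKKt
  | EF =>
      simp only [map_mul, map_add, map_sub, map_smul, FreeAlgebra.lift_ι_apply, gen]
      exact opEF hq0 hq1 hw hlam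

/-- The representation `ρ₀`. -/
def rho0 (hq0 : q ≠ 0) (hq1 : q ^ 2 ≠ 1) (hw : w ≠ 0) (hlam : lam ≠ 0) :
    Dq k q →ₐ[k] Module.End k (ℕ →₀ k) :=
  RingQuot.liftAlgHom k ⟨FreeAlgebra.lift k (gen q w lam), rel_lift hq0 hq1 hw hlam⟩

lemma rho0_cond (hq0 : q ≠ 0) (hq1 : q ^ 2 ≠ 1) (hw : w ≠ 0) (hlam : lam ≠ 0) :
    VermaCond k q w lam (rho0 hq0 hq1 hw hlam) := by
  refine ⟨?_, ?_, ?_, ?_, ?_, ?_⟩ <;>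
    simp [rho0, DE, DF, DK, DKinv, DKt, DKtinv, RingQuot.liftAlgHom_mkAlgHom_apply, gen]

lemma cond_unique (ρ₁ ρ₂ : Dq k q →ₐ[k] Module.End k (ℕ →₀ k))
    (h₁ : VermaCond k q w lam ρ₁) (h₂ : VermaCond k q w lam ρ₂) : ρ₁ = ρ₂ := by
  have key : ρ₁.comp (RingQuot.mkAlgHom k (DRel k q)) =
      ρ₂.comp (RingQuot.mkAlgHom k (DRel k q)) := by
    apply FreeAlgebra.hom_ext
    funext g
    cases g with
    | E => exact h₁.1.trans h₂.1.symm
    | F => exact h₁.2.1.trans h₂.2.1.symm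
    | K => exact h₁.2.2.1.trans h₂.2.2.1.symm
    | Kinv => exact h₁.2.2.2.1.trans h₂.2.2.2.1.symm
    | Kt => exact h₁.2.2.2.2.1.trans h₂.2.2.2.2.1.symm
    | Ktinv => exact h₁.2.2.2.2.2.trans h₂.2.2.2.2.2.symm
  apply AlgHom.ext
  intro x
  obtain ⟨y, rfl⟩ := RingQuot.mkAlgHom_surjective k (DRel k q) x
  exact DFunLike.congr_fun key y

end Rho
section Quot

attribute [local instance 2000] Algebra.toSMul

variable {k : Type} [Field k] {q w lam : k}

/-- The left ideal. -/
def Iw (k : Type) [Field k] (q w lam : k) : Ideal (Dq k q) :=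
  Ideal.span {DE k q, DK k q - (w * lam) • (1 : Dq k q),
    DKt k q - (w⁻¹ * lam) • (1 : Dq k q)}

/-- Image of `F^i` in the quotient. -/
def u (q w lam : k) (i : ℕ) : Dq k q ⧸ Iw k q w lam :=
  Submodule.Quotient.mk (DF k q ^ i)

lemma smul_mk (x y : Dq k q) :
    x • (Submodule.Quotient.mk y : Dq k q ⧸ Iw k q w lam) = Submodule.Quotient.mk (x * y) := by
  rw [← Submodule.Quotient.mk_smul, smul_eq_mul]

lemma dsmul_comm (a : Dq k q) (c : k) (v : Dq k q ⧸ Iw k q w lam) :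
    a • c • v = c • a • v := by
  obtain ⟨y, rfl⟩ := Submodule.Quotient.mk_surjective _ v
  rw [← Submodule.Quotient.mk_smul, smul_mk, smul_mk, ← Submodule.Quotient.mk_smul,
    mul_smul_comm]

-- relations in Dq
lemma rKF : DK k q * DF k q = ((q ^ 2)⁻¹) • (DF k q * DK k q) := by
  have h := RingQuot.mkAlgHom_rel k (DRel.KF (k := k) (q := q))
  simpa only [map_mul, map_smul, DK, DKt, DF] using h

lemma rKtF : DKt k q * DF k q = ((q ^ 2)⁻¹) • (DF k q * DKt k q) := by
  have h := RingQuot.mkAlgHom_rel k (DRel.KtF (k := k) (q := q))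
  simpa only [map_mul, map_smul, DK, DKt, DF] using h

lemma rEF : DE k q * DF k q =
    DF k q * DE k q + ((q - q⁻¹)⁻¹) • (DK k q - DKtinv k q) := by
  have h := RingQuot.mkAlgHom_rel k (DRel.EF (k := k) (q := q))
  simpa only [map_mul, map_smul, map_add, map_sub, DE, DF, DK, DKtinv] using h

lemma rKKinv : DK k q * DKinv k q = 1 := by
  have h := RingQuot.mkAlgHom_rel k (DRel.KKinv (k := k) (q := q))
  simpa only [map_mul, map_one, DK, DKinv, DKt, DKtinv] using h

lemma rKinvK : DKinv k q * DK k q = 1 := by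
  have h := RingQuot.mkAlgHom_rel k (DRel.KinvK (k := k) (q := q))
  simpa only [map_mul, map_one, DK, DKinv, DKt, DKtinv] using h

lemma rKtKtinv : DKt k q * DKtinv k q = 1 := by
  have h := RingQuot.mkAlgHom_rel k (DRel.KtKtinv (k := k) (q := q))
  simpa only [map_mul, map_one, DK, DKinv, DKt, DKtinv] using h

lemma rKtinvKt : DKtinv k q * DKt k q = 1 := by
  have h := RingQuot.mkAlgHom_rel k (DRel.KtinvKt (k := k) (q := q))
  simpa only [map_mul, map_one, DK, DKinv, DKt, DKtinv] using h

lemma rFK (hq0 : q ≠ 0) : DF k q * DK k q = (q ^ 2) • (DK k q * DF k q) := by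
  have h : (q ^ 2) • (DK k q * DF k q) = (q ^ 2) • (((q ^ 2)⁻¹) • (DF k q * DK k q)) := by
    rw [rKF]
  rw [smul_smul, mul_inv_cancel₀ (pow_ne_zero 2 hq0), one_smul] at h
  exact h.symm

lemma rFKt (hq0 : q ≠ 0) : DF k q * DKt k q = (q ^ 2) • (DKt k q * DF k q) := by
  have h : (q ^ 2) • (DKt k q * DF k q) = (q ^ 2) • (((q ^ 2)⁻¹) • (DF k q * DKt k q)) := by
    rw [rKtF]
  rw [smul_smul, mul_inv_cancel₀ (pow_ne_zero 2 hq0), one_smul] at h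
  exact h.symm

lemma rKinvF (hq0 : q ≠ 0) : DKinv k q * DF k q = (q ^ 2) • (DF k q * DKinv k q) := by
  calc DKinv k q * DF k q
      = DKinv k q * (DF k q * (DK k q * DKinv k q)) := by rw [rKKinv, mul_one]
    _ = DKinv k q * ((DF k q * DK k q) * DKinv k q) := by rw [mul_assoc]
    _ = DKinv k q * (((q ^ 2) • (DK k q * DF k q)) * DKinv k q) := by rw [rFK hq0]
    _ = (q ^ 2) • (DKinv k q * (DK k q * (DF k q * DKinv k q))) := by
        rw [smul_mul_assoc, mul_smul_comm, mul_assoc]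
    _ = (q ^ 2) • ((DKinv k q * DK k q) * (DF k q * DKinv k q)) := by rw [mul_assoc]
    _ = (q ^ 2) • (DF k q * DKinv k q) := by rw [rKinvK, one_mul]

lemma rKtinvF (hq0 : q ≠ 0) : DKtinv k q * DF k q = (q ^ 2) • (DF k q * DKtinv k q) := by
  calc DKtinv k q * DF k q
      = DKtinv k q * (DF k q * (DKt k q * DKtinv k q)) := by rw [rKtKtinv, mul_one]
    _ = DKtinv k q * ((DF k q * DKt k q) * DKtinv k q) := by rw [mul_assoc]
    _ = DKtinv k q * (((q ^ 2) • (DKt k q * DF k q)) * DKtinv k q) := by rw [rFKt hq0]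
    _ = (q ^ 2) • (DKtinv k q * (DKt k q * (DF k q * DKtinv k q))) := by
        rw [smul_mul_assoc, mul_smul_comm, mul_assoc]
    _ = (q ^ 2) • ((DKtinv k q * DKt k q) * (DF k q * DKtinv k q)) := by rw [mul_assoc]
    _ = (q ^ 2) • (DF k q * DKtinv k q) := by rw [rKtinvKt, one_mul]

-- memberships
lemma mem_E : DE k q ∈ Iw k q w lam := Ideal.subset_span (by simp)

lemma mem_K : DK k q - (w * lam) • (1 : Dq k q) ∈ Iw k q w lam :=
  Ideal.subset_span (by simp)

lemma mem_Kt : DKt k q - (w⁻¹ * lam) • (1 : Dq k q) ∈ Iw k q w lam :=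
  Ideal.subset_span (by simp)

lemma mem_Kinv (hw : w ≠ 0) (hlam : lam ≠ 0) :
    DKinv k q - ((w * lam)⁻¹) • (1 : Dq k q) ∈ Iw k q w lam := by
  have h : DKinv k q - ((w * lam)⁻¹) • (1 : Dq k q) =
      -((((w * lam)⁻¹) • DKinv k q) * (DK k q - (w * lam) • (1 : Dq k q))) := by
    rw [smul_mul_assoc, mul_sub, rKinvK, mul_smul_comm, mul_one, smul_sub, smul_smul,
      inv_mul_cancel₀ (mul_ne_zero hw hlam), one_smul, neg_sub]
  rw [h]
  exact neg_mem (Ideal.mul_mem_left _ _ mem_K)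

lemma mem_Ktinv (hw : w ≠ 0) (hlam : lam ≠ 0) :
    DKtinv k q - ((w⁻¹ * lam)⁻¹) • (1 : Dq k q) ∈ Iw k q w lam := by
  have h : DKtinv k q - ((w⁻¹ * lam)⁻¹) • (1 : Dq k q) =
      -((((w⁻¹ * lam)⁻¹) • DKtinv k q) * (DKt k q - (w⁻¹ * lam) • (1 : Dq k q))) := by
    rw [smul_mul_assoc, mul_sub, rKtinvKt, mul_smul_comm, mul_one, smul_sub, smul_smul,
      inv_mul_cancel₀ (mul_ne_zero (inv_ne_zero hw) hlam), one_smul, neg_sub]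
  rw [h]
  exact neg_mem (Ideal.mul_mem_left _ _ mem_Kt)

-- eigenvalues at 0
lemma kapK_zero : kapK q w lam 0 = w * lam := by simp [kapK]

lemma kapKt_zero : kapKt q w lam 0 = w⁻¹ * lam := by simp [kapKt]

-- action on u i
lemma uF (i : ℕ) : DF k q • u q w lam i = u q w lam (i + 1) := by
  rw [u, u, smul_mk, ← pow_succ']

lemma uK (hq0 : q ≠ 0) (i : ℕ) :
    DK k q • u q w lam i = kapK q w lam i • u q w lam i := by
  induction i with
  | zero =>
      rw [u, pow_zero, smul_mk, mul_one, kapK_zero]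
      rw [show ((w * lam) • (Submodule.Quotient.mk 1 : Dq k q ⧸ Iw k q w lam)) =
        Submodule.Quotient.mk ((w * lam) • (1 : Dq k q)) from
        (Submodule.Quotient.mk_smul _ _ _).symm]
      exact (Submodule.Quotient.eq _).mpr mem_K
  | succ i ih =>
      rw [← uF, ← mul_smul, rKF, smul_assoc, mul_smul, ih, dsmul_comm, uF, smul_smul,
        ← kapK_succ hq0]

lemma uKt (hq0 : q ≠ 0) (i : ℕ) :
    DKt k q • u q w lam i = kapKt q w lam i • u q w lam i := by
  induction i with
  | zero =>
      rw [u, pow_zero, smul_mk, mul_one, kapKt_zero]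
      rw [show ((w⁻¹ * lam) • (Submodule.Quotient.mk 1 : Dq k q ⧸ Iw k q w lam)) =
        Submodule.Quotient.mk ((w⁻¹ * lam) • (1 : Dq k q)) from
        (Submodule.Quotient.mk_smul _ _ _).symm]
      exact (Submodule.Quotient.eq _).mpr mem_Kt
  | succ i ih =>
      rw [← uF, ← mul_smul, rKtF, smul_assoc, mul_smul, ih, dsmul_comm, uF, smul_smul,
        ← kapKt_succ hq0]

lemma uKinv (hq0 : q ≠ 0) (hw : w ≠ 0) (hlam : lam ≠ 0) (i : ℕ) :
    DKinv k q • u q w lam i = (kapK q w lam i)⁻¹ • u q w lam i := by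
  induction i with
  | zero =>
      rw [u, pow_zero, smul_mk, mul_one, kapK_zero]
      rw [show (((w * lam)⁻¹) • (Submodule.Quotient.mk 1 : Dq k q ⧸ Iw k q w lam)) =
        Submodule.Quotient.mk (((w * lam)⁻¹) • (1 : Dq k q)) from
        (Submodule.Quotient.mk_smul _ _ _).symm]
      exact (Submodule.Quotient.eq _).mpr (mem_Kinv hw hlam)
  | succ i ih =>
      rw [← uF, ← mul_smul, rKinvF hq0, smul_assoc, mul_smul, ih, dsmul_comm, uF, smul_smul]
      congr 1
      rw [kapK_succ hq0, mul_inv, inv_inv]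

lemma uKtinv (hq0 : q ≠ 0) (hw : w ≠ 0) (hlam : lam ≠ 0) (i : ℕ) :
    DKtinv k q • u q w lam i = (kapKt q w lam i)⁻¹ • u q w lam i := by
  induction i with
  | zero =>
      rw [u, pow_zero, smul_mk, mul_one, kapKt_zero]
      rw [show (((w⁻¹ * lam)⁻¹) • (Submodule.Quotient.mk 1 : Dq k q ⧸ Iw k q w lam)) =
        Submodule.Quotient.mk (((w⁻¹ * lam)⁻¹) • (1 : Dq k q)) from
        (Submodule.Quotient.mk_smul _ _ _).symm]
      exact (Submodule.Quotient.eq _).mpr (mem_Ktinv hw hlam)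
  | succ i ih =>
      rw [← uF, ← mul_smul, rKtinvF hq0, smul_assoc, mul_smul, ih, dsmul_comm, uF, smul_smul]
      congr 1
      rw [kapKt_succ hq0, mul_inv, inv_inv]

lemma uE (hq0 : q ≠ 0) (hq1 : q ^ 2 ≠ 1) (hw : w ≠ 0) (hlam : lam ≠ 0) (i : ℕ) :
    DE k q • u q w lam i = cE q w lam i • u q w lam (i - 1) := by
  induction i with
  | zero =>
      rw [u, pow_zero, smul_mk, mul_one, cE_zero]
      simp only [zero_smul]
      exact (Submodule.Quotient.mk_eq_zero _).mpr mem_E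
  | succ i ih =>
      rw [← uF, ← mul_smul, rEF, add_smul, mul_smul, ih, dsmul_comm]
      have hfirst : cE q w lam i • DF k q • u q w lam (i - 1) = cE q w lam i • u q w lam i := by
        cases i with
        | zero => rw [cE_zero]; simp only [zero_smul]
        | succ j => rw [Nat.succ_sub_one, uF]
      rw [hfirst, smul_assoc, sub_smul, uK hq0, uKtinv hq0 hw hlam, ← sub_smul, smul_smul,
        ← add_smul, ← cE_rec hq0 hq1 hw hlam, Nat.succ_sub_one]

/-- `ψ : M → Dq/I`, `m_i ↦ [F^i]`. -/
def psiI (q w lam : k) : (ℕ →₀ k) →ₗ[k] (Dq k q ⧸ Iw k q w lam) :=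
  Finsupp.lift _ k ℕ fun i => u q w lam i

lemma psiI_single (i : ℕ) (b : k) :
    psiI q w lam (Finsupp.single i b) = b • u q w lam i := by
  rw [psiI, Finsupp.lift_apply, Finsupp.sum_single_index (by simp)]

lemma intertwine (hq0 : q ≠ 0) (hq1 : q ^ 2 ≠ 1) (hw : w ≠ 0) (hlam : lam ≠ 0)
    (ρ : Dq k q →ₐ[k] Module.End k (ℕ →₀ k)) (hρ : VermaCond k q w lam ρ) :
    ∀ (x : Dq k q) (m : ℕ →₀ k), psiI q w lam (ρ x m) = x • psiI q w lam m := by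
  intro x
  obtain ⟨y, rfl⟩ := RingQuot.mkAlgHom_surjective k (DRel k q) x
  induction y using FreeAlgebra.induction with
  | grade0 c =>
      intro m
      rw [AlgHom.commutes, AlgHom.commutes, Module.algebraMap_end_apply, map_smul,
        algebraMap_smul]
  | grade1 g =>
      intro m
      induction m using Finsupp.induction_linear with
      | zero => simp
      | add f g hf hg => rw [map_add, map_add, map_add, hf, hg, smul_add]
      | single i b =>
          cases g with
          | E =>
              show psiI q w lam (ρ (DE k q) _) = DE k q • _
              rw [hρ.1, vE_single, map_smul, psiI_single, psiI_single, one_smul, dsmul_comm,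
                uE hq0 hq1 hw hlam, smul_smul, mul_comm b]
          | F =>
              show psiI q w lam (ρ (DF k q) _) = DF k q • _
              rw [hρ.2.1, vF_single, map_smul, psiI_single, psiI_single, one_smul, dsmul_comm,
                uF]
          | K =>
              show psiI q w lam (ρ (DK k q) _) = DK k q • _
              rw [hρ.2.2.1, vK_single, map_smul, psiI_single, psiI_single, one_smul, dsmul_comm,
                uK hq0, smul_smul, mul_comm b]
          | Kinv =>
              show psiI q w lam (ρ (DKinv k q) _) = DKinv k q • _
              rw [hρ.2.2.2.1, vKinv_single, map_smul, psiI_single, psiI_single, one_smul,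
                dsmul_comm, uKinv hq0 hw hlam, smul_smul, mul_comm b]
          | Kt =>
              show psiI q w lam (ρ (DKt k q) _) = DKt k q • _
              rw [hρ.2.2.2.2.1, vKt_single, map_smul, psiI_single, psiI_single, one_smul,
                dsmul_comm, uKt hq0, smul_smul, mul_comm b]
          | Ktinv =>
              show psiI q w lam (ρ (DKtinv k q) _) = DKtinv k q • _
              rw [hρ.2.2.2.2.2, vKtinv_single, map_smul, psiI_single, psiI_single, one_smul,
                dsmul_comm, uKtinv hq0 hw hlam, smul_smul, mul_comm b]
  | mul x y hx hy =>
      intro m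
      rw [map_mul, map_mul, Module.End.mul_apply, hx, hy, mul_smul]
  | add x y hx hy =>
      intro m
      rw [map_add, map_add, LinearMap.add_apply, map_add, hx, hy, add_smul]

lemma rho_pow (ρ : Dq k q →ₐ[k] Module.End k (ℕ →₀ k)) (hρ : VermaCond k q w lam ρ) (i : ℕ) :
    ρ (DF k q ^ i) (Finsupp.single 0 1) = Finsupp.single i 1 := by
  induction i with
  | zero => rw [pow_zero, map_one, Module.End.one_apply]
  | succ i ih => rw [pow_succ', map_mul, Module.End.mul_apply, ih, hρ.2.1, vF_single, one_smul]

/-- Evaluation at the highest weight vector. -/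
def phiK (ρ : Dq k q →ₐ[k] Module.End k (ℕ →₀ k)) : Dq k q →ₗ[k] (ℕ →₀ k) where
  toFun x := ρ x (Finsupp.single 0 1)
  map_add' a b := by
    show ρ (a + b) _ = ρ a _ + ρ b _
    rw [map_add, LinearMap.add_apply]
  map_smul' c a := by
    show ρ (c • a) _ = c • ρ a _
    rw [map_smul, LinearMap.smul_apply]

lemma phiK_apply (ρ : Dq k q →ₐ[k] Module.End k (ℕ →₀ k)) (x : Dq k q) :
    phiK ρ x = ρ x (Finsupp.single 0 1) := rfl

lemma hker (ρ : Dq k q →ₐ[k] Module.End k (ℕ →₀ k)) (hρ : VermaCond k q w lam ρ) :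
    (Iw k q w lam).restrictScalars k ≤ LinearMap.ker (phiK ρ) := by
  intro x hx
  rw [Submodule.restrictScalars_mem] at hx
  rw [LinearMap.mem_ker]
  induction hx using Submodule.span_induction with
  | mem y hy =>
      simp only [Set.mem_insert_iff, Set.mem_singleton_iff] at hy
      rcases hy with rfl | rfl | rfl
      · rw [phiK_apply, hρ.1, vE_single, cE_zero, zero_mul, zero_smul]
      · rw [phiK_apply, map_sub, map_smul, map_one, LinearMap.sub_apply, LinearMap.smul_apply,
          Module.End.one_apply, hρ.2.2.1, vK_single, kapK_zero]
        simp [Finsupp.smul_single']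
      · rw [phiK_apply, map_sub, map_smul, map_one, LinearMap.sub_apply, LinearMap.smul_apply,
          Module.End.one_apply, hρ.2.2.2.2.1, vKt_single, kapKt_zero]
        simp [Finsupp.smul_single']
  | zero => rw [map_zero]
  | add a b _ _ iha ihb => rw [map_add, iha, ihb, add_zero]
  | smul r a _ ih =>
      rw [show (r • a : Dq k q) = r * a from rfl, phiK_apply, map_mul, Module.End.mul_apply,
        ← phiK_apply, ih, map_zero]

/-- The map `Dq/I → M`. -/
def eBar (ρ : Dq k q →ₐ[k] Module.End k (ℕ →₀ k))
    (h : (Iw k q w lam).restrictScalars k ≤ LinearMap.ker (phiK ρ)) :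
    (Dq k q ⧸ Iw k q w lam) →ₗ[k] (ℕ →₀ k) :=
  (((Iw k q w lam).restrictScalars k).liftQ (phiK ρ) h).comp
    (Submodule.Quotient.restrictScalarsEquiv k (Iw k q w lam)).symm.toLinearMap

lemma eBar_mk (ρ : Dq k q →ₐ[k] Module.End k (ℕ →₀ k))
    (h : (Iw k q w lam).restrictScalars k ≤ LinearMap.ker (phiK ρ)) (x : Dq k q) :
    eBar ρ h (Submodule.Quotient.mk x) = ρ x (Finsupp.single 0 1) := by
  rw [eBar, LinearMap.comp_apply, LinearEquiv.coe_toLinearMap,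
    Submodule.Quotient.restrictScalarsEquiv_symm_mk, Submodule.liftQ_apply, phiK_apply]

lemma final (hq0 : q ≠ 0) (hq1 : q ^ 2 ≠ 1) (hw : w ≠ 0) (hlam : lam ≠ 0)
    (ρ : Dq k q →ₐ[k] Module.End k (ℕ →₀ k)) (hρ : VermaCond k q w lam ρ) :
    ∃ e : (Dq k q ⧸ Iw k q w lam) ≃ₗ[k] (ℕ →₀ k),
      ∀ (x : Dq k q) (m : Dq k q ⧸ Iw k q w lam), e (x • m) = ρ x (e m) := by
  have hk := hker ρ hρ
  refine ⟨LinearEquiv.ofLinear (eBar ρ hk) (psiI q w lam) ?_ ?_, ?_⟩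
  · apply Finsupp.lhom_ext
    intro i b
    rw [LinearMap.comp_apply, psiI_single, map_smul, u, eBar_mk, rho_pow ρ hρ,
      LinearMap.id_apply, Finsupp.smul_single', mul_one]
  · apply LinearMap.ext
    intro m
    obtain ⟨x, rfl⟩ := Submodule.Quotient.mk_surjective _ m
    rw [LinearMap.comp_apply, eBar_mk, intertwine hq0 hq1 hw hlam ρ hρ, LinearMap.id_apply,
      show psiI q w lam (Finsupp.single 0 1) = (1 : k) • u q w lam 0 from psiI_single 0 1,
      one_smul, u, pow_zero, smul_mk, mul_one]
  · intro x m
    obtain ⟨y, rfl⟩ := Submodule.Quotient.mk_surjective _ m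
    rw [show x • (Submodule.Quotient.mk y : Dq k q ⧸ Iw k q w lam) =
        Submodule.Quotient.mk (x * y) from smul_mk x y,
      LinearEquiv.ofLinear_apply, LinearEquiv.ofLinear_apply, eBar_mk, eBar_mk, map_mul,
      Module.End.mul_apply]

end Quot

end VermaAux

/-- the Verma module formulas define a `D_q`-module structure on the
`k`-vector space with basis `{m_i : i ∈ ℕ}` (uniquely), and the resulting module
`M_w(λ)` is isomorphic to `D_q/(D_q·E + D_q·(K − wλ) + D_q·(K̃ − w⁻¹λ))`. -/
theorem verma_module_structure (k : Type) [Field k] (q w lam : k)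
    (hq0 : q ≠ 0) (hq1 : q ^ 2 ≠ 1) (hw : w ≠ 0) (hlam : lam ≠ 0) :
    (∃! ρ : Dq k q →ₐ[k] Module.End k (ℕ →₀ k), VermaCond k q w lam ρ) ∧
    (∀ ρ : Dq k q →ₐ[k] Module.End k (ℕ →₀ k), VermaCond k q w lam ρ →
      ∃ e : (Dq k q ⧸ (Ideal.span {DE k q, DK k q - (w * lam) • (1 : Dq k q),
              DKt k q - (w⁻¹ * lam) • (1 : Dq k q)} : Ideal (Dq k q))) ≃ₗ[k] (ℕ →₀ k),
        ∀ (x : Dq k q) (m : Dq k q ⧸ (Ideal.span {DE k q, DK k q - (w * lam) • (1 : Dq k q),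
              DKt k q - (w⁻¹ * lam) • (1 : Dq k q)} : Ideal (Dq k q))),
          e (x • m) = ρ x (e m)) := by
  constructor
  · exact ⟨VermaAux.rho0 hq0 hq1 hw hlam, VermaAux.rho0_cond hq0 hq1 hw hlam,
      fun ρ' h => VermaAux.cond_unique ρ' _ h (VermaAux.rho0_cond hq0 hq1 hw hlam)⟩
  · intro ρ hρ
    exact VermaAux.final hq0 hq1 hw hlam ρ hρ
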